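/- Under the MMQ algorithm, if user m strictly prefers the base station π(m') assigned to another user m' over its own assignment π(m), then m' precedes m in the master list, i.e., m' ≻_ML m. -/

import Mathlib

/-- Load of base station `n` under a partial assignment `π`. -/
def bsLoad {M N : Type*} [Fintype M] [DecidableEq N] (π : M → Option N) (n : N) : ℕ :=
  (Finset.univ.filter (fun m => π m = some n)).card

/-- The MMQ (matching with minimum quotas) serial-dictatorship run: users are processed
in master-list order; while the number of remaining users exceeds the total unmet minimum
quota (phase 1), each user goes to its most preferred (lowest `rank`) base station whose
load is below its maximum quota; once the remaining users exactly fill the unmet minimum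
quotas (phase 2), each user goes to its most preferred base station whose load is below
its minimum quota. -/
noncomputable def mmqRun {M N : Type*} [Fintype M] [Fintype N] [DecidableEq M] [DecidableEq N]
    (qmin qmax : N → ℕ) (rank : M → N → ℕ) :
    List M → (M → Option N) → (M → Option N)
  | [], π => π
  | m :: rest, π =>
      let κ := bsLoad π
      let deficit := ∑ n : N, (qmin n - κ n)
      let allowed : Finset N :=
        if rest.length + 1 = deficit then Finset.univ.filter (fun n => κ n < qmin n)
        else Finset.univ.filter (fun n => κ n < qmax n)
      match allowed.toList.argmin (rank m) with
      | some n => mmqRun qmin qmax rank rest (Function.update π m (some n))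
      | none => mmqRun qmin qmax rank rest π

section
set_option linter.unusedSectionVars false
variable {M N : Type*} [Fintype M] [Fintype N] [DecidableEq M] [DecidableEq N]

def allowedSet (qmin qmax : N → ℕ) (π : M → Option N) (k : ℕ) : Finset N :=
  if k = ∑ n : N, (qmin n - bsLoad π n) then Finset.univ.filter (fun n => bsLoad π n < qmin n)
  else Finset.univ.filter (fun n => bsLoad π n < qmax n)

lemma mmqRun_cons (qmin qmax : N → ℕ) (rank : M → N → ℕ) (h : M) (rest : List M)
    (π : M → Option N) :
    mmqRun qmin qmax rank (h :: rest) π =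
      match (allowedSet qmin qmax π (rest.length + 1)).toList.argmin (rank h) with
      | some n => mmqRun qmin qmax rank rest (Function.update π h (some n))
      | none => mmqRun qmin qmax rank rest π := rfl

lemma mmqRun_cons_some (qmin qmax : N → ℕ) (rank : M → N → ℕ) (h : M) (rest : List M)
    (π : M → Option N) {n : N}
    (he : (allowedSet qmin qmax π (rest.length + 1)).toList.argmin (rank h) = some n) :
    mmqRun qmin qmax rank (h :: rest) π =
      mmqRun qmin qmax rank rest (Function.update π h (some n)) := by
  rw [mmqRun_cons, he]

lemma bsLoad_update (π : M → Option N) (h : M) (n₀ : N) (hh : π h = none) (n : N) :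
    bsLoad (Function.update π h (some n₀)) n =
      if n = n₀ then bsLoad π n + 1 else bsLoad π n := by
  unfold bsLoad
  by_cases hn : n = n₀
  · subst hn
    rw [if_pos rfl]
    have : (Finset.univ.filter (fun m => Function.update π h (some n) m = some n)) =
        insert h (Finset.univ.filter (fun m => π m = some n)) := by
      ext m
      by_cases hm : m = h <;> simp [hm, Function.update_apply, hh]
    rw [this, Finset.card_insert_of_notMem (by simp [hh])]
  · rw [if_neg hn]
    congr 1
    ext m
    by_cases hm : m = h <;> simp [hm, Function.update_apply, hh, Ne.symm hn, hn]

/-- Invariants of the MMQ run. -/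
def MMQInv (qmin qmax : N → ℕ) (l : List M) (π : M → Option N) : Prop :=
  (∀ x ∈ l, π x = none) ∧ l.Nodup ∧
  (∑ n : N, (qmin n - bsLoad π n)) ≤ l.length ∧
  (∑ n : N, bsLoad π n) + l.length ≤ ∑ n : N, qmax n

lemma mmq_step (qmin qmax : N → ℕ) (hq : ∀ n, qmin n ≤ qmax n) (rank : M → N → ℕ)
    (h : M) (rest : List M) (π : M → Option N)
    (hInv : MMQInv qmin qmax (h :: rest) π) :
    ∃ n₀ ∈ allowedSet qmin qmax π (rest.length + 1),
      (allowedSet qmin qmax π (rest.length + 1)).toList.argmin (rank h) = some n₀ ∧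
      (∀ c ∈ allowedSet qmin qmax π (rest.length + 1), rank h n₀ ≤ rank h c) ∧
      MMQInv qmin qmax rest (Function.update π h (some n₀)) ∧
      (rest.length + 1 = ∑ n : N, (qmin n - bsLoad π n) →
        rest.length = ∑ n : N, (qmin n - bsLoad (Function.update π h (some n₀)) n)) := by
  obtain ⟨hnone, hnd, hdef, hroom⟩ := hInv
  have hh : π h = none := hnone h (by simp)
  -- the allowed set is nonempty
  have hne : (allowedSet qmin qmax π (rest.length + 1)).Nonempty := by
    unfold allowedSet
    split
    · rename_i hphase
      have : 0 < ∑ n : N, (qmin n - bsLoad π n) := by omega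
      by_contra hempty
      have hz : ∀ n : N, qmin n - bsLoad π n = 0 := by
        intro n
        by_contra hc
        exact hempty ⟨n, by simp only [Finset.mem_filter, Finset.mem_univ, true_and]; omega⟩
      rw [Finset.sum_congr rfl (fun n _ => hz n)] at this
      simp at this
    · by_contra hempty
      have hle : ∀ n : N, qmax n ≤ bsLoad π n := by
        intro n
        by_contra hc
        exact hempty ⟨n, by simp; omega⟩
      have := Finset.sum_le_sum (fun n (_ : n ∈ Finset.univ) => hle n)
      simp only [List.length_cons] at hroom
      omega
  have hargne : (allowedSet qmin qmax π (rest.length + 1)).toList ≠ [] := by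
    simpa [← Finset.toList_eq_nil] using hne.ne_empty
  obtain ⟨n₀, hn₀⟩ : ∃ n₀, (allowedSet qmin qmax π (rest.length + 1)).toList.argmin (rank h)
      = some n₀ := by
    rcases he : (allowedSet qmin qmax π (rest.length + 1)).toList.argmin (rank h) with _ | n₀
    · exact absurd (List.argmin_eq_none.mp he) hargne
    · exact ⟨n₀, rfl⟩
  have hn₀mem : n₀ ∈ allowedSet qmin qmax π (rest.length + 1) := by
    have := List.argmin_mem (f := rank h) (m := n₀) (by rw [hn₀]; rfl)
    simpa [Finset.mem_toList] using this
  refine ⟨n₀, hn₀mem, hn₀, ?_, ?_, ?_⟩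
  · intro c hc
    exact List.le_of_mem_argmin (l := (allowedSet qmin qmax π (rest.length + 1)).toList)
      (f := rank h) (Finset.mem_toList.mpr hc) (by rw [hn₀]; rfl)
  · -- invariants preserved
    have hupd := bsLoad_update π h n₀ hh
    have hsum : ∀ f : N → ℕ,
        (∑ n : N, (f n - bsLoad (Function.update π h (some n₀)) n)) =
          (f n₀ - (bsLoad π n₀ + 1)) + ∑ n ∈ Finset.univ.erase n₀, (f n - bsLoad π n) := by
      intro f
      rw [← Finset.add_sum_erase _ _ (Finset.mem_univ n₀), hupd n₀, if_pos rfl]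
      congr 1
      exact Finset.sum_congr rfl (fun n hn => by
        rw [hupd n, if_neg (Finset.mem_erase.mp hn).1])
    have hsumold : ∀ f : N → ℕ,
        (∑ n : N, (f n - bsLoad π n)) =
          (f n₀ - bsLoad π n₀) + ∑ n ∈ Finset.univ.erase n₀, (f n - bsLoad π n) :=
      fun f => (Finset.add_sum_erase _ _ (Finset.mem_univ n₀)).symm
    refine ⟨?_, hnd.of_cons, ?_, ?_⟩
    · intro x hx
      rw [Function.update_apply,
        if_neg (show x ≠ h by rintro rfl; exact (List.nodup_cons.mp hnd).1 hx)]
      exact hnone x (List.mem_cons_of_mem _ hx)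
    · -- deficit bound
      rw [hsum qmin]
      rw [hsumold qmin] at hdef
      simp only [List.length_cons] at hdef
      by_cases hphase : rest.length + 1 = ∑ n : N, (qmin n - bsLoad π n)
      · have : bsLoad π n₀ < qmin n₀ := by
          have := hn₀mem
          unfold allowedSet at this
          rw [if_pos hphase] at this
          simpa using this
        rw [hsumold qmin] at hphase
        omega
      · rw [hsumold qmin] at hphase
        omega
    · -- room bound
      have : (∑ n : N, bsLoad (Function.update π h (some n₀)) n) =
          (∑ n : N, bsLoad π n) + 1 := by
        have h1 : (∑ n : N, bsLoad (Function.update π h (some n₀)) n) =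
            bsLoad (Function.update π h (some n₀)) n₀ +
              ∑ n ∈ Finset.univ.erase n₀, bsLoad (Function.update π h (some n₀)) n :=
          (Finset.add_sum_erase _ _ (Finset.mem_univ n₀)).symm
        have h2 : (∑ n : N, bsLoad π n) =
            bsLoad π n₀ + ∑ n ∈ Finset.univ.erase n₀, bsLoad π n :=
          (Finset.add_sum_erase _ _ (Finset.mem_univ n₀)).symm
        have h3 : (∑ n ∈ Finset.univ.erase n₀, bsLoad (Function.update π h (some n₀)) n) =
            ∑ n ∈ Finset.univ.erase n₀, bsLoad π n :=
          Finset.sum_congr rfl (fun n hn => by rw [hupd n, if_neg (Finset.mem_erase.mp hn).1])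
        rw [h1, h2, h3, hupd n₀, if_pos rfl]
        omega
      simp only [List.length_cons] at hroom
      omega
  · -- phase 2 persistence
    intro hphase
    have hlt : bsLoad π n₀ < qmin n₀ := by
      have := hn₀mem
      unfold allowedSet at this
      rw [if_pos hphase] at this
      simpa using this
    have hupd := bsLoad_update π h n₀ hh
    rw [← Finset.add_sum_erase _ _ (Finset.mem_univ n₀), hupd n₀, if_pos rfl]
    rw [← Finset.add_sum_erase _ (fun n => qmin n - bsLoad π n) (Finset.mem_univ n₀)] at hphase
    have : ∀ n ∈ Finset.univ.erase n₀, qmin n - bsLoad (Function.update π h (some n₀)) n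
        = qmin n - bsLoad π n := fun n hn => by rw [hupd n, if_neg (Finset.mem_erase.mp hn).1]
    rw [Finset.sum_congr rfl this]
    omega


lemma mmqRun_notmem (qmin qmax : N → ℕ) (rank : M → N → ℕ) :
    ∀ (l : List M) (π : M → Option N) (x : M), x ∉ l →
      mmqRun qmin qmax rank l π x = π x := by
  intro l
  induction l with
  | nil => intro π x _; rfl
  | cons h rest ih =>
    intro π x hx
    have hxh : x ≠ h := fun hc => hx (hc ▸ List.mem_cons_self (a := h) (l := rest))
    have hxr : x ∉ rest := fun hc => hx (List.mem_cons_of_mem _ hc)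
    rcases he : (allowedSet qmin qmax π (rest.length + 1)).toList.argmin (rank h) with _ | n
    · rw [mmqRun_cons, he]
      exact ih π x hxr
    · rw [mmqRun_cons_some qmin qmax rank h rest π he, ih _ x hxr,
        Function.update_apply, if_neg hxh]

/-- `b` is blocked: it is at max quota, or we are in phase 2 and it is at min quota. -/
def Blocked (qmin qmax : N → ℕ) (l : List M) (π : M → Option N) (b : N) : Prop :=
  qmax b ≤ bsLoad π b ∨
  (l.length = ∑ n : N, (qmin n - bsLoad π n) ∧ qmin b ≤ bsLoad π b)

lemma blocked_never (qmin qmax : N → ℕ) (hq : ∀ n, qmin n ≤ qmax n) (rank : M → N → ℕ)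
    (b : N) :
    ∀ (l : List M) (π : M → Option N), MMQInv qmin qmax l π → Blocked qmin qmax l π b →
      ∀ x ∈ l, mmqRun qmin qmax rank l π x ≠ some b := by
  intro l
  induction l with
  | nil => intro π _ _ x hx; simp at hx
  | cons h rest ih =>
    intro π hInv hB x hx
    obtain ⟨n₀, hn₀mem, hn₀arg, hmin, hInv', hphase⟩ := mmq_step qmin qmax hq rank h rest π hInv
    rw [mmqRun_cons_some qmin qmax rank h rest π hn₀arg]
    have hh : π h = none := hInv.1 h (by simp)
    have hbnot : b ∉ allowedSet qmin qmax π (rest.length + 1) := by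
      unfold allowedSet
      rcases hB with hB | ⟨hB1, hB2⟩
      · have := hq b
        split <;> · simp only [Finset.mem_filter, Finset.mem_univ, true_and]; omega
      · rw [if_pos (by simpa using hB1)]
        simp only [Finset.mem_filter, Finset.mem_univ, true_and]; omega
    have hn₀b : n₀ ≠ b := fun hc => hbnot (hc ▸ hn₀mem)
    have hupd := bsLoad_update π h n₀ hh
    have hB' : Blocked qmin qmax rest (Function.update π h (some n₀)) b := by
      rcases hB with hB | ⟨hB1, hB2⟩
      · left; rw [hupd b]; split <;> omega
      · right
        constructor
        · exact hphase (by simpa using hB1)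
        · rw [hupd b]; split <;> omega
    rcases List.mem_cons.mp hx with rfl | hx
    · have : x ∉ rest := (List.nodup_cons.mp hInv.2.1).1
      rw [mmqRun_notmem qmin qmax rank rest _ _ this, Function.update_self]
      exact fun hc => hn₀b (Option.some.inj hc)
    · exact ih (Function.update π h (some n₀)) hInv' hB' x hx


lemma mmq_main (qmin qmax : N → ℕ) (hq : ∀ n, qmin n ≤ qmax n) (rank : M → N → ℕ) :
    ∀ (l : List M) (π : M → Option N), MMQInv qmin qmax l π →
      ∀ (m m' : M) (a b : N), m ∈ l → m' ∈ l →
        mmqRun qmin qmax rank l π m = some a →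
        mmqRun qmin qmax rank l π m' = some b →
        rank m b < rank m a → l.idxOf m' < l.idxOf m := by
  intro l
  induction l with
  | nil => intro π _ m m' a b hm _; simp at hm
  | cons h rest ih =>
    intro π hInv m m' a b hmmem hm'mem hm hm' hpref
    obtain ⟨n₀, hn₀mem, hn₀arg, hmin, hInv', hphase⟩ := mmq_step qmin qmax hq rank h rest π hInv
    have hh : π h = none := hInv.1 h (by simp)
    have hupd := bsLoad_update π h n₀ hh
    rw [mmqRun_cons_some qmin qmax rank h rest π hn₀arg] at hm hm'
    by_cases hmm' : m = m'
    · subst hmm'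
      rw [hm] at hm'
      exact absurd hpref (by simp_all)
    by_cases hmh : m = h
    · -- m is the head: derive a contradiction
      exfalso
      subst hmh
      have hmnotr : m ∉ rest := (List.nodup_cons.mp hInv.2.1).1
      rw [mmqRun_notmem qmin qmax rank rest _ _ hmnotr, Function.update_self] at hm
      have ha : a = n₀ := by simpa using hm.symm
      rw [ha] at hpref
      have hm'r : m' ∈ rest := by
        rcases List.mem_cons.mp hm'mem with h' | h' 
        · exact absurd h'.symm hmm'
        · exact h'
      have hbnot : b ∉ allowedSet qmin qmax π (rest.length + 1) := by
        intro hc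
        exact absurd hpref (not_lt.mpr (hmin b hc))
      have hB' : Blocked qmin qmax rest (Function.update π m (some n₀)) b := by
        unfold allowedSet at hbnot
        by_cases hph : rest.length + 1 = ∑ n : N, (qmin n - bsLoad π n)
        · rw [if_pos hph] at hbnot
          simp only [Finset.mem_filter, Finset.mem_univ, true_and, not_lt] at hbnot
          exact Or.inr ⟨hphase hph, by rw [hupd b]; split <;> omega⟩
        · rw [if_neg hph] at hbnot
          simp only [Finset.mem_filter, Finset.mem_univ, true_and, not_lt] at hbnot
          exact Or.inl (by rw [hupd b]; split <;> omega)
      exact blocked_never qmin qmax hq rank b rest _ hInv' hB' m' hm'r hm'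
    · -- m is in the tail
      have hmr : m ∈ rest := by
        rcases List.mem_cons.mp hmmem with h' | h'
        · exact absurd h' hmh
        · exact h'
      by_cases hm'h : m' = h
      · subst hm'h
        rw [List.idxOf_cons_self, List.idxOf_cons_ne rest (Ne.symm hmh)]
        exact Nat.succ_pos _
      · have hm'r : m' ∈ rest := by
          rcases List.mem_cons.mp hm'mem with h' | h'
          · exact absurd h' hm'h
          · exact h'
        rw [List.idxOf_cons_ne rest (Ne.symm hmh), List.idxOf_cons_ne rest (Ne.symm hm'h)]
        exact Nat.succ_lt_succ (ih _ hInv' m m' a b hmr hm'r hm hm' hpref)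

end

/-- ML-fairness of MMQ: if user `m` strictly prefers the base station assigned to another
user `m'` over its own assignment, then `m'` precedes `m` in the master list `ml`. -/
theorem mmq_ml_fair {M N : Type*} [Fintype M] [Fintype N]
    [DecidableEq M] [DecidableEq N]
    (qmin qmax : N → ℕ) (rank : M → N → ℕ)
    (hrank : ∀ m : M, Function.Injective (rank m))
    (hq : ∀ n, qmin n ≤ qmax n)
    (hlow : ∑ n : N, qmin n ≤ Fintype.card M)
    (hhigh : Fintype.card M ≤ ∑ n : N, qmax n)
    (ml : List M) (hml : ml.Nodup) (hfull : ∀ m : M, m ∈ ml)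
    (m m' : M) (a b : N)
    (hm : mmqRun qmin qmax rank ml (fun _ => none) m = some a)
    (hm' : mmqRun qmin qmax rank ml (fun _ => none) m' = some b)
    (hpref : rank m b < rank m a) :
    ml.idxOf m' < ml.idxOf m := by
  have hlen : ml.length = Fintype.card M := by
    have h1 : ml.toFinset = Finset.univ :=
      Finset.eq_univ_iff_forall.mpr (fun x => List.mem_toFinset.mpr (hfull x))
    have h2 := List.toFinset_card_of_nodup hml
    rw [h1] at h2
    rw [← h2, Fintype.card]
  have h0 : ∀ n : N, bsLoad (fun _ : M => none) n = 0 := by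
    intro n; simp [bsLoad]
  refine mmq_main qmin qmax hq rank ml _ ⟨fun _ _ => rfl, hml, ?_, ?_⟩ m m' a b
    (hfull m) (hfull m') hm hm' hpref
  · simp only [h0, Nat.sub_zero]
    omega
  · simp only [h0, Finset.sum_const_zero, Nat.zero_add]
    omega
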